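/- Let p, q ≥ 2 be integers, μ ∈ ℂ ∖ {0}, and u₀, v₀ ∈ ℂ ∖ {0} with p·|u₀|^{p−1} = 1, q·|v₀|^{q−1} = 1, and Θ₂ = Θ₄ + κπ for some integer κ; assume cos Θ₂ ≠ 0, k₁ ≠ 0, and φ = 0 where φ = (−1)^κ (p−1)|v₀| sin Θ₃ + (q−1)|μ||u₀| sin Θ₁. With R̂ = R − tan(Θ₂)·Q and A = R̂_{r₁r₁}(x₀)/k₁², B = R̂_{r₁θ₁}(x₀)/k₁, C = R̂_{θ₁θ₁}(x₀), D = R̂_{r₂r₂}(x₀), E = R̂_{r₂θ₂}(x₀), the following identities hold: (i) k₂²A − 2k₂B + C = (4(p−1)|μ|³|u₀| sin Θ₁ cos Θ₂)/k₁²; (ii) k₃²(AC − B²) + D·(k₂²A − 2k₂B + C) = −4(p−1)²|μ|²/k₁²; (iii) −k₃k₄(k₂A − B)² + (k₃k₄A + E)(k₂²A − 2k₂B + C) = 0. -/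

import Mathlib

private lemma hd_lin (n ν x : ℝ) : HasDerivAt (fun θ : ℝ => n * θ + ν) n x := by
  simpa using ((hasDerivAt_id x).const_mul n).add_const ν

private lemma hd_negl (ν x : ℝ) : HasDerivAt (fun θ : ℝ => -θ + ν) (-1) x := by
  simpa using ((hasDerivAt_id x).neg).add_const ν

private lemma hd_sinl (n ν x : ℝ) :
    HasDerivAt (fun θ : ℝ => Real.sin (n * θ + ν)) (Real.cos (n * x + ν) * n) x := by
  simpa [Function.comp_def] using (Real.hasDerivAt_sin (n * x + ν)).comp x (hd_lin n ν x)

private lemma hd_cosl (n ν x : ℝ) :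
    HasDerivAt (fun θ : ℝ => Real.cos (n * θ + ν)) (-Real.sin (n * x + ν) * n) x := by
  simpa [Function.comp_def] using (Real.hasDerivAt_cos (n * x + ν)).comp x (hd_lin n ν x)

private lemma hd_sinn (ν x : ℝ) :
    HasDerivAt (fun θ : ℝ => Real.sin (-θ + ν)) (-Real.cos (-x + ν)) x := by
  simpa [Function.comp_def] using (Real.hasDerivAt_sin (-x + ν)).comp x (hd_negl ν x)

private lemma hd_cosn (ν x : ℝ) :
    HasDerivAt (fun θ : ℝ => Real.cos (-θ + ν)) (Real.sin (-x + ν)) x := by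
  simpa [Function.comp_def] using (Real.hasDerivAt_cos (-x + ν)).comp x (hd_negl ν x)

private lemma hd_linz (n x : ℝ) : HasDerivAt (fun θ : ℝ => n * θ) n x := by
  simpa using (hasDerivAt_id x).const_mul n

private lemma hd_sinz (n x : ℝ) :
    HasDerivAt (fun θ : ℝ => Real.sin (n * θ)) (Real.cos (n * x) * n) x := by
  simpa [Function.comp_def] using (Real.hasDerivAt_sin (n * x)).comp x (hd_linz n x)

private lemma hd_cosz (n x : ℝ) :
    HasDerivAt (fun θ : ℝ => Real.cos (n * θ)) (-Real.sin (n * x) * n) x := by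
  simpa [Function.comp_def] using (Real.hasDerivAt_cos (n * x)).comp x (hd_linz n x)

private lemma hd_sinnz (x : ℝ) :
    HasDerivAt (fun θ : ℝ => Real.sin (-θ)) (-Real.cos (-x)) x :=
  ((Real.hasDerivAt_sin (-x)).comp x (hasDerivAt_id x).neg).congr_deriv (by ring)

private lemma hd_cosnz (x : ℝ) :
    HasDerivAt (fun θ : ℝ => Real.cos (-θ)) (Real.sin (-x)) x :=
  ((Real.hasDerivAt_cos (-x)).comp x (hasDerivAt_id x).neg).congr_deriv (by ring)

private lemma hr_pow (c d : ℝ) (n : ℕ) (x : ℝ) :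
    HasDerivAt (fun r : ℝ => c * r ^ n * d) (c * ((n : ℝ) * x ^ (n - 1)) * d) x :=
  ((hasDerivAt_pow n x).const_mul c).mul_const d

private lemma hr_lin (c d x : ℝ) : HasDerivAt (fun r : ℝ => c * r * d) (c * d) x := by
  simpa using ((hasDerivAt_id x).const_mul c).mul_const d

private lemma hr_pow2 (d : ℝ) (n : ℕ) (x : ℝ) :
    HasDerivAt (fun r : ℝ => r ^ n * d) ((n : ℝ) * x ^ (n - 1) * d) x :=
  (hasDerivAt_pow n x).mul_const d

private lemma hr_idm (d x : ℝ) : HasDerivAt (fun r : ℝ => r * d) d x := by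
  simpa using (hasDerivAt_id x).mul_const d

private lemma hr_pow3 (m c d : ℝ) (k : ℕ) (x : ℝ) :
    HasDerivAt (fun r : ℝ => m * (c * r ^ k) * d)
      (m * (c * ((k : ℝ) * x ^ (k - 1))) * d) x :=
  (((hasDerivAt_pow k x).const_mul c).const_mul m).mul_const d

private lemma T1 (m d e K₁ K₂ : ℝ) (n : ℕ) (x : ℝ) :
    deriv (fun r : ℝ => m * r ^ n * d + m * r * e + K₁ + K₂) x
      = m * ((n : ℝ) * x ^ (n - 1)) * d + m * e :=
  ((((hr_pow m d n x).add (hr_lin m e x)).add_const K₁).add_const K₂).deriv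

private lemma T2 (C₁ C₂ K₁ K₂ ν : ℝ) (n : ℕ) (x : ℝ) :
    deriv (fun θ : ℝ => C₁ * Real.cos ((n : ℝ) * θ + ν) + C₂ * Real.cos (-θ + ν) + K₁ + K₂) x
      = -(C₁ * (n : ℝ) * Real.sin ((n : ℝ) * x + ν)) + C₂ * Real.sin (-x + ν) :=
  (((((hd_cosl n ν x).const_mul C₁).add ((hd_cosn ν x).const_mul C₂)).add_const
      K₁).add_const K₂).deriv.trans (by ring)

private lemma T3 (d e K₁ K₂ : ℝ) (n : ℕ) (x : ℝ) :
    deriv (fun r : ℝ => K₁ + K₂ + r ^ n * d + r * e) x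
      = (n : ℝ) * x ^ (n - 1) * d + e :=
  ((((hasDerivAt_const x K₁).add_const K₂).add (hr_pow2 d n x)).add
      (hr_idm e x)).deriv.trans (by ring)

private lemma T4 (C₁ C₂ K₁ K₂ : ℝ) (n : ℕ) (x : ℝ) :
    deriv (fun θ : ℝ => K₁ + K₂ + C₁ * Real.cos ((n : ℝ) * θ) + C₂ * Real.cos (-θ)) x
      = -(C₁ * (n : ℝ) * Real.sin ((n : ℝ) * x)) + C₂ * Real.sin (-x) :=
  ((((hasDerivAt_const x K₁).add_const K₂).add ((hd_cosz n x).const_mul C₁)).add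
      ((hd_cosnz x).const_mul C₂)).deriv.trans (by ring)

private lemma T5 (m t d₁ e₁ d₂ e₂ K₁ K₂ K₃ K₄ : ℝ) (n : ℕ) (x : ℝ) :
    deriv (fun r : ℝ => m * r ^ n * d₁ + m * r * e₁ + K₁ + K₂
        - t * (m * r ^ n * d₂ + m * r * e₂ + K₃ + K₄)) x
      = m * ((n : ℝ) * x ^ (n - 1)) * d₁ + m * e₁
        - t * (m * ((n : ℝ) * x ^ (n - 1)) * d₂ + m * e₂) :=
  (((((hr_pow m d₁ n x).add (hr_lin m e₁ x)).add_const K₁).add_const K₂).sub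
      ((((((hr_pow m d₂ n x).add (hr_lin m e₂ x)).add_const K₃).add_const
        K₄)).const_mul t)).deriv.trans (by ring)

private lemma T6 (m t c d₁ e₁ d₂ e₂ : ℝ) (k : ℕ) (x : ℝ) :
    deriv (fun r : ℝ => m * (c * r ^ k) * d₁ + m * e₁
        - t * (m * (c * r ^ k) * d₂ + m * e₂)) x
      = m * (c * ((k : ℝ) * x ^ (k - 1))) * d₁
        - t * (m * (c * ((k : ℝ) * x ^ (k - 1))) * d₂) :=
  (((hr_pow3 m c d₁ k x).add_const (m * e₁)).sub
      (((hr_pow3 m c d₂ k x).add_const (m * e₂)).const_mul t)).deriv.trans (by ring)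

private lemma T7 (C₁ C₂ t ν : ℝ) (n : ℕ) (x : ℝ) :
    deriv (fun θ : ℝ => C₁ * Real.sin ((n : ℝ) * θ + ν) + C₂ * Real.sin (-θ + ν)
        - t * (C₁ * Real.cos ((n : ℝ) * θ + ν) + C₂ * Real.cos (-θ + ν))) x
      = C₁ * (n : ℝ) * Real.cos ((n : ℝ) * x + ν) - C₂ * Real.cos (-x + ν)
        - t * (-(C₁ * (n : ℝ) * Real.sin ((n : ℝ) * x + ν)) + C₂ * Real.sin (-x + ν)) :=
  ((((hd_sinl n ν x).const_mul C₁).add ((hd_sinn ν x).const_mul C₂)).sub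
      ((((hd_cosl n ν x).const_mul C₁).add
        ((hd_cosn ν x).const_mul C₂)).const_mul t)).deriv.trans (by ring)

private lemma T8 (C₁ C₂ t ν K₁ K₂ K₃ K₄ : ℝ) (n : ℕ) (x : ℝ) :
    deriv (fun θ : ℝ => C₁ * Real.sin ((n : ℝ) * θ + ν) + C₂ * Real.sin (-θ + ν) + K₁ + K₂
        - t * (C₁ * Real.cos ((n : ℝ) * θ + ν) + C₂ * Real.cos (-θ + ν) + K₃ + K₄)) x
      = C₁ * (n : ℝ) * Real.cos ((n : ℝ) * x + ν) + -C₂ * Real.cos (-x + ν)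
        - t * (-(C₁ * (n : ℝ)) * Real.sin ((n : ℝ) * x + ν) + C₂ * Real.sin (-x + ν)) :=
  (((((((hd_sinl n ν x).const_mul C₁).add ((hd_sinn ν x).const_mul C₂)).add_const
        K₁).add_const K₂)).sub
      ((((((hd_cosl n ν x).const_mul C₁).add ((hd_cosn ν x).const_mul C₂)).add_const
        K₃).add_const K₄).const_mul t)).deriv.trans (by ring)

private lemma T9 (D₁ D₂ D₃ D₄ t ν : ℝ) (n : ℕ) (x : ℝ) :
    deriv (fun θ : ℝ => D₁ * Real.cos ((n : ℝ) * θ + ν) + D₂ * Real.cos (-θ + ν)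
        - t * (D₃ * Real.sin ((n : ℝ) * θ + ν) + D₄ * Real.sin (-θ + ν))) x
      = -(D₁ * (n : ℝ) * Real.sin ((n : ℝ) * x + ν)) + D₂ * Real.sin (-x + ν)
        - t * (D₃ * (n : ℝ) * Real.cos ((n : ℝ) * x + ν) - D₄ * Real.cos (-x + ν)) :=
  ((((hd_cosl n ν x).const_mul D₁).add ((hd_cosn ν x).const_mul D₂)).sub
      ((((hd_sinl n ν x).const_mul D₃).add
        ((hd_sinn ν x).const_mul D₄)).const_mul t)).deriv.trans (by ring)

private lemma T10 (t d₁ e₁ d₂ e₂ K₁ K₂ K₃ K₄ : ℝ) (n : ℕ) (x : ℝ) :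
    deriv (fun r : ℝ => K₁ + K₂ + r ^ n * d₁ + r * e₁
        - t * (K₃ + K₄ + r ^ n * d₂ + r * e₂)) x
      = (n : ℝ) * x ^ (n - 1) * d₁ + e₁ - t * ((n : ℝ) * x ^ (n - 1) * d₂ + e₂) :=
  (((((hasDerivAt_const x K₁).add_const K₂).add (hr_pow2 d₁ n x)).add (hr_idm e₁ x)).sub
      (((((hasDerivAt_const x K₃).add_const K₄).add (hr_pow2 d₂ n x)).add
        (hr_idm e₂ x)).const_mul t)).deriv.trans (by ring)

private lemma T11 (t c d₁ e₁ d₂ e₂ : ℝ) (k : ℕ) (x : ℝ) :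
    deriv (fun r : ℝ => c * r ^ k * d₁ + e₁ - t * (c * r ^ k * d₂ + e₂)) x
      = c * ((k : ℝ) * x ^ (k - 1)) * d₁ - t * (c * ((k : ℝ) * x ^ (k - 1)) * d₂) :=
  (((hr_pow c d₁ k x).add_const e₁).sub
      (((hr_pow c d₂ k x).add_const e₂).const_mul t)).deriv.trans (by ring)

private lemma T12 (C₁ t : ℝ) (n : ℕ) (x : ℝ) :
    deriv (fun θ : ℝ => C₁ * Real.sin ((n : ℝ) * θ) + Real.sin (-θ)
        - t * (C₁ * Real.cos ((n : ℝ) * θ) + Real.cos (-θ))) x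
      = C₁ * (n : ℝ) * Real.cos ((n : ℝ) * x) - Real.cos (-x)
        - t * (-(C₁ * (n : ℝ) * Real.sin ((n : ℝ) * x)) + Real.sin (-x)) :=
  ((((hd_sinz n x).const_mul C₁).add (hd_sinnz x)).sub
      ((((hd_cosz n x).const_mul C₁).add (hd_cosnz x)).const_mul t)).deriv.trans (by ring)

set_option maxHeartbeats 1000000 in
/-- identities from Lemma 3.11: at a singular point with `k₁ ≠ 0`,
`cos Θ₂ ≠ 0` and `φ = 0`, the quantities `A, ..., E` built from the second
derivatives of `R̂ = R - tan(Θ₂) Q` satisfy the three identities (i)–(iii). -/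
theorem identities_at_cusp_candidate
    (p q : ℕ) (hp : 2 ≤ p) (hq : 2 ≤ q) (μ : ℂ) (hμ : μ ≠ 0)
    (u₀ v₀ : ℂ) (hu₀ : u₀ ≠ 0) (hv₀ : v₀ ≠ 0)
    (hu : (p : ℝ) * ‖u₀‖ ^ (p - 1) = 1)
    (hv : (q : ℝ) * ‖v₀‖ ^ (q - 1) = 1)
    (Q R Rhat : ℝ → ℝ → ℝ → ℝ → ℝ)
    (hQ : ∀ r₁ θ₁ r₂ θ₂, Q r₁ θ₁ r₂ θ₂ =
      ‖μ‖ * r₁ ^ p * Real.cos (p * θ₁ + Complex.arg μ)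
        + ‖μ‖ * r₁ * Real.cos (-θ₁ + Complex.arg μ)
        + r₂ ^ q * Real.cos (q * θ₂) + r₂ * Real.cos (-θ₂))
    (hR : ∀ r₁ θ₁ r₂ θ₂, R r₁ θ₁ r₂ θ₂ =
      ‖μ‖ * r₁ ^ p * Real.sin (p * θ₁ + Complex.arg μ)
        + ‖μ‖ * r₁ * Real.sin (-θ₁ + Complex.arg μ)
        + r₂ ^ q * Real.sin (q * θ₂) + r₂ * Real.sin (-θ₂))
    (Θ₁ Θ₂ Θ₃ Θ₄ : ℝ)
    (hΘ₁ : Θ₁ = ((p : ℝ) + 1) / 2 * Complex.arg u₀)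
    (hΘ₂ : Θ₂ = ((p : ℝ) - 1) / 2 * Complex.arg u₀ + Complex.arg μ)
    (hΘ₃ : Θ₃ = ((q : ℝ) + 1) / 2 * Complex.arg v₀)
    (hΘ₄ : Θ₄ = ((q : ℝ) - 1) / 2 * Complex.arg v₀)
    (κ : ℤ) (hκ : Θ₂ = Θ₄ + κ * Real.pi)
    (hcos : Real.cos Θ₂ ≠ 0)
    (hRhat : ∀ r₁ θ₁ r₂ θ₂, Rhat r₁ θ₁ r₂ θ₂ =
      R r₁ θ₁ r₂ θ₂ - Real.tan Θ₂ * Q r₁ θ₁ r₂ θ₂)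
    (k₁ k₂ k₃ k₄ : ℝ)
    (hk₁ : k₁ = deriv (fun r₁ => Q r₁ (Complex.arg u₀) (‖v₀‖) (Complex.arg v₀))
      (‖u₀‖))
    (hk₂ : k₂ = deriv (fun θ₁ => Q (‖u₀‖) θ₁ (‖v₀‖) (Complex.arg v₀))
      (Complex.arg u₀))
    (hk₃ : k₃ = deriv (fun r₂ => Q (‖u₀‖) (Complex.arg u₀) r₂ (Complex.arg v₀))
      (‖v₀‖))
    (hk₄ : k₄ = deriv (fun θ₂ => Q (‖u₀‖) (Complex.arg u₀) (‖v₀‖) θ₂)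
      (Complex.arg v₀))
    (hk₁0 : k₁ ≠ 0)
    (φ : ℝ)
    (hφdef : φ = (-1 : ℝ) ^ κ * ((p : ℝ) - 1) * ‖v₀‖ * Real.sin Θ₃
      + ((q : ℝ) - 1) * ‖μ‖ * ‖u₀‖ * Real.sin Θ₁)
    (hφ : φ = 0)
    (A B C D E : ℝ)
    (hA : A = deriv (deriv (fun r₁ =>
        Rhat r₁ (Complex.arg u₀) (‖v₀‖) (Complex.arg v₀))) (‖u₀‖) / k₁ ^ 2)
    (hB : B = deriv (fun θ₁ =>
        deriv (fun r₁ => Rhat r₁ θ₁ (‖v₀‖) (Complex.arg v₀)) (‖u₀‖))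
        (Complex.arg u₀) / k₁)
    (hC : C = deriv (deriv (fun θ₁ =>
        Rhat (‖u₀‖) θ₁ (‖v₀‖) (Complex.arg v₀))) (Complex.arg u₀))
    (hD : D = deriv (deriv (fun r₂ =>
        Rhat (‖u₀‖) (Complex.arg u₀) r₂ (Complex.arg v₀))) (‖v₀‖))
    (hE : E = deriv (fun θ₂ =>
        deriv (fun r₂ => Rhat (‖u₀‖) (Complex.arg u₀) r₂ θ₂) (‖v₀‖))
        (Complex.arg v₀)) :
    k₂ ^ 2 * A - 2 * k₂ * B + C
        = 4 * ((p : ℝ) - 1) * ‖μ‖ ^ 3 * ‖u₀‖ * Real.sin Θ₁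
            * Real.cos Θ₂ / k₁ ^ 2 ∧
    k₃ ^ 2 * (A * C - B ^ 2) + D * (k₂ ^ 2 * A - 2 * k₂ * B + C)
        = -(4 * ((p : ℝ) - 1) ^ 2 * ‖μ‖ ^ 2) / k₁ ^ 2 ∧
    -(k₃ * k₄) * (k₂ * A - B) ^ 2 + (k₃ * k₄ * A + E) * (k₂ ^ 2 * A - 2 * k₂ * B + C)
        = 0 := by
  have hm0 : 0 < ‖μ‖ := norm_pos_iff.mpr hμ
  have ha0 : 0 < ‖u₀‖ := norm_pos_iff.mpr hu₀
  have hb0 : 0 < ‖v₀‖ := norm_pos_iff.mpr hv₀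
  set m := ‖μ‖ with hmdef
  set ν := Complex.arg μ with hνdef
  set a := ‖u₀‖ with hadef
  set α := Complex.arg u₀ with hαdef
  set b := ‖v₀‖ with hbdef
  set β := Complex.arg v₀ with hβdef
  set ε : ℝ := (-1 : ℝ) ^ κ with hεdef

  have hp0 : ((p : ℝ)) ≠ 0 := by
    have : 0 < p := by omega
    exact_mod_cast this.ne'
  have hq0 : ((q : ℝ)) ≠ 0 := by
    have : 0 < q := by omega
    exact_mod_cast this.ne'
  have hm' : m ≠ 0 := ne_of_gt hm0
  have ha' : a ≠ 0 := ne_of_gt ha0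
  have hb' : b ≠ 0 := ne_of_gt hb0
  -- angle identities
  have harg1 : (p : ℝ) * α + ν = Θ₁ + Θ₂ := by rw [hΘ₁, hΘ₂]; ring
  have harg2 : -α + ν = Θ₂ - Θ₁ := by rw [hΘ₁, hΘ₂]; ring
  have harg3 : (q : ℝ) * β = Θ₃ + Θ₄ := by rw [hΘ₃, hΘ₄]; ring
  have harg4 : -β = Θ₄ - Θ₃ := by rw [hΘ₃, hΘ₄]; ring
  have hΘ4 : Θ₄ = Θ₂ - κ * Real.pi := by linarith
  have hc4 : Real.cos Θ₄ = ε * Real.cos Θ₂ := by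
    rw [hΘ4, Real.cos_sub_int_mul_pi, hεdef]
  have hs4 : Real.sin Θ₄ = ε * Real.sin Θ₂ := by
    rw [hΘ4, Real.sin_sub_int_mul_pi, hεdef]
  have hε2 : ε * ε = 1 := by
    rw [hεdef, ← mul_zpow]; norm_num
  -- power facts
  have hpab : a ^ (p - 1) = 1 / (p : ℝ) := by
    field_simp
    linear_combination hu
  have hap : a ^ p = a / (p : ℝ) := by
    rw [show a ^ p = a ^ (p - 1) * a from by
      rw [← pow_succ, show p - 1 + 1 = p from by omega], hpab]
    ring
  have hap2 : a ^ (p - 1 - 1) = 1 / ((p : ℝ) * a) := by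
    have h : a ^ (p - 1 - 1) * a = a ^ (p - 1) := by
      rw [← pow_succ, show p - 1 - 1 + 1 = p - 1 from by omega]
    rw [hpab] at h
    field_simp at h ⊢
    linarith
  have hqb : b ^ (q - 1) = 1 / (q : ℝ) := by
    field_simp
    linear_combination hv
  have hbq : b ^ q = b / (q : ℝ) := by
    rw [show b ^ q = b ^ (q - 1) * b from by
      rw [← pow_succ, show q - 1 + 1 = q from by omega], hqb]
    ring
  have hbq2 : b ^ (q - 1 - 1) = 1 / ((q : ℝ) * b) := by
    have h : b ^ (q - 1 - 1) * b = b ^ (q - 1) := by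
      rw [← pow_succ, show q - 1 - 1 + 1 = q - 1 from by omega]
    rw [hqb] at h
    field_simp at h ⊢
    linarith
  have hcp : ((p - 1 : ℕ) : ℝ) = (p : ℝ) - 1 := by
    have h := Nat.cast_sub (by omega : 1 ≤ p) (R := ℝ); simpa using h
  have hcq : ((q - 1 : ℕ) : ℝ) = (q : ℝ) - 1 := by
    have h := Nat.cast_sub (by omega : 1 ≤ q) (R := ℝ); simpa using h
  -- k values
  have ek1 : (fun r₁ => Q r₁ α b β) = fun r₁ =>
      m * r₁ ^ p * Real.cos ((p : ℝ) * α + ν) + m * r₁ * Real.cos (-α + ν)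
        + b ^ q * Real.cos ((q : ℝ) * β) + b * Real.cos (-β) :=
    funext fun r => hQ r α b β
  have hk1v : k₁ = 2 * m * Real.cos Θ₂ * Real.cos Θ₁ := by
    rw [hk₁, ek1, T1, hu, harg1, harg2, Real.cos_add, Real.cos_sub]; ring
  have ek2 : (fun θ₁ => Q a θ₁ b β) = fun θ₁ =>
      m * a ^ p * Real.cos ((p : ℝ) * θ₁ + ν) + m * a * Real.cos (-θ₁ + ν)
        + b ^ q * Real.cos ((q : ℝ) * β) + b * Real.cos (-β) :=
    funext fun θ => hQ a θ b β
  have hk2v : k₂ = -(2 * m * a * Real.cos Θ₂ * Real.sin Θ₁) := by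
    rw [hk₂, ek2, T2, hap, harg1, harg2, Real.sin_add, Real.sin_sub]
    field_simp
    ring
  have ek3 : (fun r₂ => Q a α r₂ β) = fun r₂ =>
      m * a ^ p * Real.cos ((p : ℝ) * α + ν) + m * a * Real.cos (-α + ν)
        + r₂ ^ q * Real.cos ((q : ℝ) * β) + r₂ * Real.cos (-β) :=
    funext fun r => hQ a α r β
  have hk3v : k₃ = 2 * ε * Real.cos Θ₂ * Real.cos Θ₃ := by
    rw [hk₃, ek3, T3, hv, harg3, harg4, Real.cos_add, Real.cos_sub, hc4, hs4]; ring
  have ek4 : (fun θ₂ => Q a α b θ₂) = fun θ₂ =>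
      m * a ^ p * Real.cos ((p : ℝ) * α + ν) + m * a * Real.cos (-α + ν)
        + b ^ q * Real.cos ((q : ℝ) * θ₂) + b * Real.cos (-θ₂) :=
    funext fun θ => hQ a α b θ
  have hk4v : k₄ = -(2 * b * ε * Real.cos Θ₂ * Real.sin Θ₃) := by
    rw [hk₄, ek4, T4, hbq, harg3, harg4, Real.sin_add, Real.sin_sub, hc4, hs4]
    field_simp
    ring
  -- A
  have eA : (fun r₁ => Rhat r₁ α b β) = fun r₁ =>
      m * r₁ ^ p * Real.sin ((p : ℝ) * α + ν) + m * r₁ * Real.sin (-α + ν)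
        + b ^ q * Real.sin ((q : ℝ) * β) + b * Real.sin (-β)
      - Real.tan Θ₂ * (m * r₁ ^ p * Real.cos ((p : ℝ) * α + ν) + m * r₁ * Real.cos (-α + ν)
        + b ^ q * Real.cos ((q : ℝ) * β) + b * Real.cos (-β)) := by
    funext r; rw [hRhat, hR, hQ]
  have eA2 : deriv (fun r₁ => Rhat r₁ α b β) = fun r : ℝ =>
      m * ((p : ℝ) * r ^ (p - 1)) * Real.sin ((p : ℝ) * α + ν) + m * Real.sin (-α + ν)
      - Real.tan Θ₂ * (m * ((p : ℝ) * r ^ (p - 1)) * Real.cos ((p : ℝ) * α + ν)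
        + m * Real.cos (-α + ν)) := by
    rw [eA]; funext r; rw [T5]
  have hAval : A = m * ((p : ℝ) - 1) * Real.sin Θ₁ / (a * Real.cos Θ₂ * k₁ ^ 2) := by
    rw [hA, eA2, T6, hap2, hcp, harg1, Real.sin_add, Real.cos_add, Real.tan_eq_sin_div_cos]
    field_simp
    linear_combination (((p:ℝ) - 1) * Real.sin Θ₁) *
      Real.sin_sq_add_cos_sq Θ₂
  -- B
  have eB : ∀ θ : ℝ, deriv (fun r₁ => Rhat r₁ θ b β) a =
      m * ((p : ℝ) * a ^ (p - 1)) * Real.sin ((p : ℝ) * θ + ν) + m * Real.sin (-θ + ν)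
      - Real.tan Θ₂ * (m * ((p : ℝ) * a ^ (p - 1)) * Real.cos ((p : ℝ) * θ + ν)
        + m * Real.cos (-θ + ν)) := by
    intro θ
    have e : (fun r₁ => Rhat r₁ θ b β) = fun r₁ =>
        m * r₁ ^ p * Real.sin ((p : ℝ) * θ + ν) + m * r₁ * Real.sin (-θ + ν)
          + b ^ q * Real.sin ((q : ℝ) * β) + b * Real.sin (-β)
        - Real.tan Θ₂ * (m * r₁ ^ p * Real.cos ((p : ℝ) * θ + ν) + m * r₁ * Real.cos (-θ + ν)
          + b ^ q * Real.cos ((q : ℝ) * β) + b * Real.cos (-β)) := by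
      funext r; rw [hRhat, hR, hQ]
    rw [e, T5]
  have eB2 : (fun θ₁ => deriv (fun r₁ => Rhat r₁ θ₁ b β) a) = fun θ : ℝ =>
      m * ((p : ℝ) * a ^ (p - 1)) * Real.sin ((p : ℝ) * θ + ν) + m * Real.sin (-θ + ν)
      - Real.tan Θ₂ * (m * ((p : ℝ) * a ^ (p - 1)) * Real.cos ((p : ℝ) * θ + ν)
        + m * Real.cos (-θ + ν)) := funext eB
  have hBval : B = m * ((p : ℝ) - 1) * Real.cos Θ₁ / (Real.cos Θ₂ * k₁) := by
    rw [hB, eB2, T7, hu, harg1, harg2, Real.sin_add, Real.cos_add, Real.sin_sub,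
      Real.cos_sub, Real.tan_eq_sin_div_cos]
    field_simp
    linear_combination (((p:ℝ) - 1) * Real.cos Θ₁) * Real.sin_sq_add_cos_sq Θ₂
  -- C
  have eC : (fun θ₁ => Rhat a θ₁ b β) = fun θ : ℝ =>
      m * a ^ p * Real.sin ((p : ℝ) * θ + ν) + m * a * Real.sin (-θ + ν)
        + b ^ q * Real.sin ((q : ℝ) * β) + b * Real.sin (-β)
      - Real.tan Θ₂ * (m * a ^ p * Real.cos ((p : ℝ) * θ + ν) + m * a * Real.cos (-θ + ν)
        + b ^ q * Real.cos ((q : ℝ) * β) + b * Real.cos (-β)) := by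
    funext θ; rw [hRhat, hR, hQ]
  have eC2 : deriv (fun θ₁ => Rhat a θ₁ b β) = fun θ : ℝ =>
      m * a ^ p * (p : ℝ) * Real.cos ((p : ℝ) * θ + ν) + -(m * a) * Real.cos (-θ + ν)
      - Real.tan Θ₂ * (-(m * a ^ p * (p : ℝ)) * Real.sin ((p : ℝ) * θ + ν)
        + m * a * Real.sin (-θ + ν)) := by
    rw [eC]; funext θ; rw [T8]
  have hCval : C = -(m * a * ((p : ℝ) - 1) * Real.sin Θ₁ / Real.cos Θ₂) := by
    rw [hC, eC2, T9, hap, harg1, harg2, Real.sin_add, Real.cos_add, Real.sin_sub,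
      Real.cos_sub, Real.tan_eq_sin_div_cos]
    field_simp
    linear_combination (-(((p:ℝ) - 1) * Real.sin Θ₁)) * Real.sin_sq_add_cos_sq Θ₂
  -- D
  have eD : (fun r₂ => Rhat a α r₂ β) = fun r : ℝ =>
      m * a ^ p * Real.sin ((p : ℝ) * α + ν) + m * a * Real.sin (-α + ν)
        + r ^ q * Real.sin ((q : ℝ) * β) + r * Real.sin (-β)
      - Real.tan Θ₂ * (m * a ^ p * Real.cos ((p : ℝ) * α + ν) + m * a * Real.cos (-α + ν)
        + r ^ q * Real.cos ((q : ℝ) * β) + r * Real.cos (-β)) := by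
    funext r; rw [hRhat, hR, hQ]
  have eD2 : deriv (fun r₂ => Rhat a α r₂ β) = fun r : ℝ =>
      (q : ℝ) * r ^ (q - 1) * Real.sin ((q : ℝ) * β) + Real.sin (-β)
      - Real.tan Θ₂ * ((q : ℝ) * r ^ (q - 1) * Real.cos ((q : ℝ) * β) + Real.cos (-β)) := by
    rw [eD]; funext r; rw [T10]
  have hDval : D = ((q : ℝ) - 1) * ε * Real.sin Θ₃ / (b * Real.cos Θ₂) := by
    rw [hD, eD2, T11, hbq2, hcq, harg3, Real.sin_add, Real.cos_add, hc4, hs4,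
      Real.tan_eq_sin_div_cos]
    field_simp
    linear_combination (ε * Real.sin Θ₃ * ((q:ℝ) - 1)) *
      Real.sin_sq_add_cos_sq Θ₂
  -- E
  have eE : ∀ θ : ℝ, deriv (fun r₂ => Rhat a α r₂ θ) b =
      (q : ℝ) * b ^ (q - 1) * Real.sin ((q : ℝ) * θ) + Real.sin (-θ)
      - Real.tan Θ₂ * ((q : ℝ) * b ^ (q - 1) * Real.cos ((q : ℝ) * θ) + Real.cos (-θ)) := by
    intro θ
    have e : (fun r₂ => Rhat a α r₂ θ) = fun r : ℝ =>
        m * a ^ p * Real.sin ((p : ℝ) * α + ν) + m * a * Real.sin (-α + ν)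
          + r ^ q * Real.sin ((q : ℝ) * θ) + r * Real.sin (-θ)
        - Real.tan Θ₂ * (m * a ^ p * Real.cos ((p : ℝ) * α + ν) + m * a * Real.cos (-α + ν)
          + r ^ q * Real.cos ((q : ℝ) * θ) + r * Real.cos (-θ)) := by
      funext r; rw [hRhat, hR, hQ]
    rw [e, T10]
  have eE2 : (fun θ₂ => deriv (fun r₂ => Rhat a α r₂ θ₂) b) = fun θ : ℝ =>
      (q : ℝ) * b ^ (q - 1) * Real.sin ((q : ℝ) * θ) + Real.sin (-θ)
      - Real.tan Θ₂ * ((q : ℝ) * b ^ (q - 1) * Real.cos ((q : ℝ) * θ) + Real.cos (-θ)) :=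
    funext eE
  have hEval : E = ((q : ℝ) - 1) * ε * Real.cos Θ₃ / Real.cos Θ₂ := by
    rw [hE, eE2, T12, hv, harg3, harg4, Real.sin_add, Real.cos_add, Real.sin_sub,
      Real.cos_sub, hc4, hs4, Real.tan_eq_sin_div_cos]
    field_simp
    linear_combination (((q:ℝ) - 1) * ε * Real.cos Θ₃) * Real.sin_sq_add_cos_sq Θ₂
  -- phi relation
  have hφ2 : ε * ((p : ℝ) - 1) * b * Real.sin Θ₃ + ((q : ℝ) - 1) * m * a * Real.sin Θ₁ = 0 := by
    linear_combination hφ - hφdef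
  have hc10 : Real.cos Θ₁ ≠ 0 := by
    intro h; apply hk₁0; rw [hk1v, h]; ring
  have hs1 := Real.sin_sq_add_cos_sq Θ₁
  have hs3 := Real.sin_sq_add_cos_sq Θ₃
  refine ⟨?_, ?_, ?_⟩
  · rw [hAval, hBval, hCval, hk2v, hk1v]
    field_simp
    linear_combination (4 * ((p:ℝ) - 1) * Real.sin Θ₁) * Real.sin_sq_add_cos_sq Θ₁
  · rw [hAval, hBval, hCval, hDval, hk2v, hk3v, hk1v]
    field_simp
    linear_combination ((-4) * b * ε ^ 2 * Real.cos Θ₃ ^ 2 + 8 * b * (p:ℝ) * ε ^ 2 * Real.cos Θ₃ ^ 2 + (-4) * b * (p:ℝ) ^ 2 * ε ^ 2 * Real.cos Θ₃ ^ 2 + 4 * m * a * ε * Real.sin Θ₁ * Real.sin Θ₃ + (-4) * m * a * (q:ℝ) * ε * Real.sin Θ₁ * Real.sin Θ₃ + (-4) * m * a * (p:ℝ) * ε * Real.sin Θ₁ * Real.sin Θ₃ + 4 * m * a * (p:ℝ) * (q:ℝ) * ε * Real.sin Θ₁ * Real.sin Θ₃) * hs1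
      + ((-4) * b + 8 * b * (p:ℝ) + (-4) * b * (p:ℝ) ^ 2) * hs3
      + ((-4) * b * Real.cos Θ₃ ^ 2 + (-4) * b * Real.sin Θ₃ ^ 2 + 8 * b * (p:ℝ) * Real.cos Θ₃ ^ 2 + 8 * b * (p:ℝ) * Real.sin Θ₃ ^ 2 + (-4) * b * (p:ℝ) ^ 2 * Real.cos Θ₃ ^ 2 + (-4) * b * (p:ℝ) ^ 2 * Real.sin Θ₃ ^ 2) * hε2
      + ((-4) * ε * Real.sin Θ₃ + 4 * (p:ℝ) * ε * Real.sin Θ₃) * hφ2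
  · rw [hAval, hBval, hCval, hEval, hk2v, hk3v, hk4v, hk1v]
    field_simp
    linear_combination (b * ε ^ 2 * Real.cos Θ₁ ^ 2 * Real.sin Θ₃ * Real.cos Θ₃ + (-2) * b * (p:ℝ) * ε ^ 2 * Real.cos Θ₁ ^ 2 * Real.sin Θ₃ * Real.cos Θ₃ + b * (p:ℝ) ^ 2 * ε ^ 2 * Real.cos Θ₁ ^ 2 * Real.sin Θ₃ * Real.cos Θ₃ + m * a * ε * Real.sin Θ₁ * Real.cos Θ₁ ^ 2 * Real.cos Θ₃ + (-1) * m * a * (q:ℝ) * ε * Real.sin Θ₁ * Real.cos Θ₁ ^ 2 * Real.cos Θ₃ + (-1) * m * a * (p:ℝ) * ε * Real.sin Θ₁ * Real.cos Θ₁ ^ 2 * Real.cos Θ₃ + m * a * (p:ℝ) * (q:ℝ) * ε * Real.sin Θ₁ * Real.cos Θ₁ ^ 2 * Real.cos Θ₃) * hs1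
      + ((-1) * ε * Real.cos Θ₁ ^ 2 * Real.cos Θ₃ + (p:ℝ) * ε * Real.cos Θ₁ ^ 2 * Real.cos Θ₃) * hφ2
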